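/- Let [A] be an interval m×n matrix with midpoint A_c and entrywise-nonnegative radius Δ, and let [x] = [x̲, x̄] be an interval vector in ℝ^n (x̲ ≤ x̄ componentwise). For b ∈ ℝ^m, the following are equivalent: (i) b ∈ Ω_∀∃([A],[x]), i.e., for every matrix A with |A − A_c| ≤ Δ entrywise there exists x with x̲ ≤ x ≤ x̄ such that A x = b; (ii) for every sign vector s ∈ {−1, +1}^m there exist x₁, x₂ ∈ ℝ^n with x₁ ≥ 0, x₂ ≥ 0, x̲ ≤ x₁ − x₂ ≤ x̄, and b = (A_c − diag(s)Δ)x₁ − (A_c + diag(s)Δ)x₂, where diag(s) is the diagonal matrix with diagonal entries s. -/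
import Mathlib
open Matrix Finset

lemma clm_eq_sum {m : ℕ} (f : (Fin m → ℝ) →L[ℝ] ℝ) (v : Fin m → ℝ) :
    f v = ∑ i, f (Pi.single i 1) * v i := by
  have h : v = ∑ i, v i • (Pi.single i 1 : Fin m → ℝ) := by
    funext j
    simp [Finset.sum_apply, Pi.single_apply]
  conv_lhs => rw [h]
  rw [map_sum]
  apply Finset.sum_congr rfl
  intro i _
  rw [f.map_smul]
  simp [mul_comm]

lemma sum_swap_mul {m n : ℕ} (p : Fin m → ℝ) (M : Matrix (Fin m) (Fin n) ℝ) (x : Fin n → ℝ) :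
    ∑ i, p i * (M.mulVec x i) = ∑ j, (∑ i, p i * M i j) * x j := by
  simp only [Matrix.mulVec, dotProduct, Finset.mul_sum, Finset.sum_mul]
  rw [Finset.sum_comm]
  exact Finset.sum_congr rfl fun j _ => Finset.sum_congr rfl fun i _ => by ring

lemma keyeq {m n : ℕ} (Ac Δ : Matrix (Fin m) (Fin n) ℝ) (s : Fin m → ℝ)
    (x₁ x₂ : Fin n → ℝ) (i : Fin m) :
    ((Ac - Matrix.diagonal s * Δ).mulVec x₁ - (Ac + Matrix.diagonal s * Δ).mulVec x₂) i
      = (Ac.mulVec (x₁ - x₂)) i - s i * (Δ.mulVec (x₁ + x₂)) i := by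
  simp only [Pi.sub_apply, Matrix.mulVec, dotProduct, Matrix.sub_apply, Matrix.add_apply,
    Matrix.diagonal_mul, Pi.add_apply, Finset.mul_sum]
  rw [← Finset.sum_sub_distrib, ← Finset.sum_sub_distrib]
  exact Finset.sum_congr rfl fun j _ => by ring

lemma oneD (l u d c : ℝ) (hlu : l ≤ u) (hd : 0 ≤ d) :
    ∃ e xs : ℝ, |e| ≤ d ∧ l ≤ xs ∧ xs ≤ u ∧
      ∀ x, l ≤ x → x ≤ u → (c - e) * x ≤ c * xs - d * |xs| := by
  rcases le_or_gt 0 l with hl | hl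
  · rcases le_or_gt d c with hdc | hdc
    · refine ⟨d, u, le_of_eq (abs_of_nonneg hd), hlu, le_rfl, fun x hxl hxu => ?_⟩
      rw [abs_of_nonneg (le_trans hl hlu)]; nlinarith
    · refine ⟨d, l, le_of_eq (abs_of_nonneg hd), le_rfl, hlu, fun x hxl hxu => ?_⟩
      rw [abs_of_nonneg hl]; nlinarith
  rcases le_or_gt u 0 with hu | hu
  · rcases le_or_gt (-d) c with hdc | hdc
    · refine ⟨-d, u, by rw [abs_neg]; exact le_of_eq (abs_of_nonneg hd), hlu, le_rfl, fun x hxl hxu => ?_⟩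
      rw [abs_of_nonpos hu]; nlinarith
    · refine ⟨-d, l, by rw [abs_neg]; exact le_of_eq (abs_of_nonneg hd), le_rfl, hlu, fun x hxl hxu => ?_⟩
      rw [abs_of_nonpos (le_of_lt hl)]; nlinarith
  · rcases le_or_gt (|c|) d with hcd | hcd
    · exact ⟨c, 0, hcd, le_of_lt hl, le_of_lt hu, fun x _ _ => by simp⟩
    · rcases le_or_gt 0 c with hc | hc
      · rw [abs_of_nonneg hc] at hcd
        refine ⟨d, u, le_of_eq (abs_of_nonneg hd), hlu, le_rfl, fun x hxl hxu => ?_⟩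
        rw [abs_of_nonneg (le_of_lt hu)]; nlinarith
      · rw [abs_of_neg hc] at hcd
        refine ⟨-d, l, by rw [abs_neg]; exact le_of_eq (abs_of_nonneg hd), le_rfl, hlu, fun x hxl hxu => ?_⟩
        rw [abs_of_nonpos (le_of_lt hl)]; nlinarith

/-- Characterization of membership `b ∈ Ω_∀∃([A],[x])` via solvability of
`2^m` linear systems, one for each sign vector `s ∈ {−1,+1}^m`. -/
theorem mem_omega_forall_exists_iff_sign_systems
    {m n : ℕ} (Ac Δ : Matrix (Fin m) (Fin n) ℝ) (hΔ : ∀ i j, 0 ≤ Δ i j)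
    (xl xu : Fin n → ℝ) (hx : ∀ j, xl j ≤ xu j) (b : Fin m → ℝ) :
    (∀ A : Matrix (Fin m) (Fin n) ℝ, (∀ i j, |A i j - Ac i j| ≤ Δ i j) →
        ∃ x : Fin n → ℝ, (∀ j, xl j ≤ x j ∧ x j ≤ xu j) ∧ A.mulVec x = b) ↔
    (∀ s : Fin m → ℝ, (∀ i, s i = 1 ∨ s i = -1) →
        ∃ x₁ x₂ : Fin n → ℝ,
          (∀ j, 0 ≤ x₁ j) ∧ (∀ j, 0 ≤ x₂ j) ∧
          (∀ j, xl j ≤ x₁ j - x₂ j ∧ x₁ j - x₂ j ≤ xu j) ∧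
          b = (Ac - Matrix.diagonal s * Δ).mulVec x₁
              - (Ac + Matrix.diagonal s * Δ).mulVec x₂) := by
  constructor
  · -- (i) → (ii)
    intro h s hs
    by_contra hc
    set Y : Fin n → ℝ := fun j => |xl j| + |xu j| with hY
    set M : Matrix (Fin m) (Fin n) ℝ := Matrix.diagonal s * Δ with hM
    set L : ((Fin n → ℝ) × (Fin n → ℝ)) →ₗ[ℝ] (Fin m → ℝ) :=
      Ac.mulVecLin ∘ₗ LinearMap.fst ℝ _ _ - M.mulVecLin ∘ₗ LinearMap.snd ℝ _ _ with hL
    set D : Set ((Fin n → ℝ) × (Fin n → ℝ)) :=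
      {q | (∀ j, xl j ≤ q.1 j ∧ q.1 j ≤ xu j) ∧ (∀ j, |q.1 j| ≤ q.2 j ∧ q.2 j ≤ Y j)} with hD
    have hLapp : ∀ (x y : Fin n → ℝ) (i : Fin m),
        L (x, y) i = Ac.mulVec x i - s i * Δ.mulVec y i := by
      intro x y i
      have hMy : M.mulVec y i = s i * Δ.mulVec y i := by
        simp [hM, Matrix.mulVec, dotProduct, Matrix.diagonal_mul, Finset.mul_sum,
          mul_assoc]
      simp [hL, Matrix.mulVecLin_apply, hMy, LinearMap.sub_apply, Pi.sub_apply]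
    have hbB : b ∉ L '' D := by
      rintro ⟨⟨x, y⟩, ⟨hx1, hx2⟩, hLb⟩
      apply hc
      refine ⟨fun j => (y j + x j)/2, fun j => (y j - x j)/2, fun j => ?_, fun j => ?_,
        fun j => ?_, ?_⟩
      · obtain ⟨ha, hb2⟩ := abs_le.mp (hx2 j).1
        show 0 ≤ (y j + x j)/2
        linarith
      · obtain ⟨ha, hb2⟩ := abs_le.mp (hx2 j).1
        show 0 ≤ (y j - x j)/2
        linarith
      · show xl j ≤ (y j + x j)/2 - (y j - x j)/2 ∧ (y j + x j)/2 - (y j - x j)/2 ≤ xu j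
        constructor
        · linarith [(hx1 j).1]
        · linarith [(hx1 j).2]
      · funext i
        rw [keyeq]
        have e1 : (fun j => (y j + x j)/2) - (fun j => (y j - x j)/2) = x := by
          funext j; simp only [Pi.sub_apply]; ring
        have e2 : (fun j => (y j + x j)/2) + (fun j => (y j - x j)/2) = y := by
          funext j; simp only [Pi.add_apply]; ring
        rw [e1, e2, ← hLb]
        exact hLapp x y i
    have hDconv : Convex ℝ D := by
      rintro ⟨x, y⟩ ⟨hx1, hx2⟩ ⟨x', y'⟩ ⟨hx1', hx2'⟩ a a' ha ha' haa
      have hfst : ∀ j, (a • (x, y) + a' • (x', y')).1 j = a * x j + a' * x' j := by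
        intro j; simp [Prod.smul_fst, Prod.fst_add]
      have hsnd : ∀ j, (a • (x, y) + a' • (x', y')).2 j = a * y j + a' * y' j := by
        intro j; simp [Prod.smul_snd, Prod.snd_add]
      have p1 : ∀ j, xl j ≤ x j := fun j => (hx1 j).1
      have p2 : ∀ j, x j ≤ xu j := fun j => (hx1 j).2
      have p1' : ∀ j, xl j ≤ x' j := fun j => (hx1' j).1
      have p2' : ∀ j, x' j ≤ xu j := fun j => (hx1' j).2
      have q1 : ∀ j, |x j| ≤ y j := fun j => (hx2 j).1
      have q2 : ∀ j, y j ≤ Y j := fun j => (hx2 j).2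
      have q1' : ∀ j, |x' j| ≤ y' j := fun j => (hx2' j).1
      have q2' : ∀ j, y' j ≤ Y j := fun j => (hx2' j).2
      have hcomb : ∀ c : ℝ, a * c + a' * c = c := fun c => by
        rw [← add_mul, haa, one_mul]
      constructor
      · intro j
        rw [hfst j]
        constructor
        · have t1 := mul_le_mul_of_nonneg_left (p1 j) ha
          have t2 := mul_le_mul_of_nonneg_left (p1' j) ha'
          linarith [hcomb (xl j)]
        · have t1 := mul_le_mul_of_nonneg_left (p2 j) ha
          have t2 := mul_le_mul_of_nonneg_left (p2' j) ha'
          linarith [hcomb (xu j)]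
      · intro j
        rw [hfst j, hsnd j]
        constructor
        · have habs := abs_add_le (a * x j) (a' * x' j)
          rw [abs_mul, abs_of_nonneg ha, abs_mul, abs_of_nonneg ha'] at habs
          have t1 := mul_le_mul_of_nonneg_left (q1 j) ha
          have t2 := mul_le_mul_of_nonneg_left (q1' j) ha'
          linarith
        · have t1 := mul_le_mul_of_nonneg_left (q2 j) ha
          have t2 := mul_le_mul_of_nonneg_left (q2' j) ha'
          linarith [hcomb (Y j)]
    have hDcl : IsClosed D := by
      have hDeq : D = ⋂ j, ({q : (Fin n → ℝ) × (Fin n → ℝ) | xl j ≤ q.1 j}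
          ∩ {q | q.1 j ≤ xu j} ∩ {q | |q.1 j| ≤ q.2 j} ∩ {q | q.2 j ≤ Y j}) := by
        ext q
        simp only [hD, Set.mem_iInter, Set.mem_inter_iff, Set.mem_setOf_eq]
        constructor
        · rintro ⟨h1, h2⟩ j
          exact ⟨⟨⟨(h1 j).1, (h1 j).2⟩, (h2 j).1⟩, (h2 j).2⟩
        · intro hq
          exact ⟨fun j => ⟨(hq j).1.1.1, (hq j).1.1.2⟩, fun j => ⟨(hq j).1.2, (hq j).2⟩⟩
      rw [hDeq]
      refine isClosed_iInter fun j => ?_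
      have c1 : Continuous fun q : (Fin n → ℝ) × (Fin n → ℝ) => q.1 j :=
        (continuous_apply j).comp continuous_fst
      have c2 : Continuous fun q : (Fin n → ℝ) × (Fin n → ℝ) => q.2 j :=
        (continuous_apply j).comp continuous_snd
      exact (((isClosed_le continuous_const c1).inter (isClosed_le c1 continuous_const)).inter
        (isClosed_le c1.abs c2)).inter (isClosed_le c2 continuous_const)
    have hDsub : D ⊆ Set.Icc xl xu ×ˢ Set.Icc (fun _ => (0:ℝ)) Y := by
      rintro ⟨x, y⟩ ⟨h1, h2⟩
      constructor
      · exact Set.mem_Icc.mpr ⟨Pi.le_def.mpr fun j => (h1 j).1, Pi.le_def.mpr fun j => (h1 j).2⟩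
      · exact Set.mem_Icc.mpr ⟨Pi.le_def.mpr fun j => le_trans (abs_nonneg _) (h2 j).1,
          Pi.le_def.mpr fun j => (h2 j).2⟩
    have hDcomp : IsCompact D :=
      IsCompact.of_isClosed_subset (isCompact_Icc.prod isCompact_Icc) hDcl hDsub
    obtain ⟨f, u, hfu, hub⟩ := geometric_hahn_banach_closed_point
      (hDconv.linear_image L) (hDcomp.image L.continuous_of_finiteDimensional).isClosed hbB
    set p : Fin m → ℝ := fun i => f (Pi.single i 1) with hp
    have hf : ∀ v, f v = ∑ i, p i * v i := fun v => clm_eq_sum f v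
    have hd0 : ∀ j, (0:ℝ) ≤ ∑ i, |p i| * Δ i j :=
      fun j => Finset.sum_nonneg fun i _ => mul_nonneg (abs_nonneg _) (hΔ i j)
    choose e xs he hxsl hxsu hkey using
      fun j => oneD (xl j) (xu j) (∑ i, |p i| * Δ i j) (∑ i, p i * Ac i j) (hx j) (hd0 j)
    set sg : Fin m → ℝ := fun i => if p i < 0 then -1 else 1 with hsg
    have hpsg : ∀ i, p i * sg i = |p i| := by
      intro i
      by_cases hpi : p i < 0
      · simp only [hsg, if_pos hpi, abs_of_neg hpi]; ring
      · simp only [hsg, if_neg hpi, abs_of_nonneg (le_of_not_gt hpi)]; ring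
    have he0 : ∀ j, (∑ i, |p i| * Δ i j) = 0 → e j = 0 := by
      intro j h0
      have h1 := he j
      rw [h0] at h1
      exact abs_eq_zero.mp (le_antisymm h1 (abs_nonneg _))
    have hediv : ∀ j, |e j / (∑ i, |p i| * Δ i j)| ≤ 1 := by
      intro j
      rcases eq_or_lt_of_le (hd0 j) with h0 | h0
      · rw [he0 j h0.symm]; simp
      · rw [abs_div, abs_of_pos h0, div_le_one h0]; exact he j
    set E : Matrix (Fin m) (Fin n) ℝ :=
      fun i j => Δ i j * sg i * (e j / (∑ i, |p i| * Δ i j)) with hE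
    have hA : ∀ i j, |(Ac - E) i j - Ac i j| ≤ Δ i j := by
      intro i j
      have : (Ac - E) i j - Ac i j = -(E i j) := by
        simp [Matrix.sub_apply]
      rw [this, abs_neg, hE]
      have hsgabs : |sg i| = 1 := by
        by_cases hpi : p i < 0 <;> simp [hsg, hpi]
      calc |Δ i j * sg i * (e j / (∑ i, |p i| * Δ i j))|
          = Δ i j * |sg i| * |e j / (∑ i, |p i| * Δ i j)| := by
            rw [abs_mul, abs_mul, abs_of_nonneg (hΔ i j)]
        _ ≤ Δ i j * 1 * 1 := by
            rw [hsgabs]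
            nlinarith [mul_le_mul_of_nonneg_left (hediv j) (hΔ i j),
              abs_nonneg (e j / (∑ i, |p i| * Δ i j))]
        _ = Δ i j := by ring
    obtain ⟨x, hxmem, hxeq⟩ := h (Ac - E) hA
    have hsum : ∀ j, ∑ i, p i * E i j = e j := by
      intro j
      have h1 : ∑ i, p i * E i j = (e j / (∑ i, |p i| * Δ i j)) * ∑ i, |p i| * Δ i j := by
        rw [Finset.mul_sum]
        exact Finset.sum_congr rfl fun i _ => by rw [hE, ← hpsg i]; ring
      rw [h1]
      rcases eq_or_lt_of_le (hd0 j) with h0 | h0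
      · rw [he0 j h0.symm, ← h0]; simp
      · field_simp
    have key1 : f ((Ac - E).mulVec x) = ∑ j, ((∑ i, p i * Ac i j) - e j) * x j := by
      rw [hf, sum_swap_mul]
      apply Finset.sum_congr rfl
      intro j _
      congr 1
      rw [← hsum j, ← Finset.sum_sub_distrib]
      exact Finset.sum_congr rfl fun i _ => by rw [Matrix.sub_apply]; ring
    have key2 : ∑ j, ((∑ i, p i * Ac i j) - e j) * x j
        ≤ ∑ j, ((∑ i, p i * Ac i j) * xs j - (∑ i, |p i| * Δ i j) * |xs j|) :=
      Finset.sum_le_sum fun j _ => hkey j (x j) (hxmem j).1 (hxmem j).2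
    have key3 : ∑ j, ((∑ i, p i * Ac i j) * xs j - (∑ i, |p i| * Δ i j) * |xs j|)
        = f (Ac.mulVec xs) - ∑ i, |p i| * (Δ.mulVec (fun j => |xs j|)) i := by
      rw [Finset.sum_sub_distrib, hf, sum_swap_mul, sum_swap_mul]
    have hΔxs : ∀ i, (0:ℝ) ≤ (Δ.mulVec (fun j => |xs j|)) i := by
      intro i
      show (0:ℝ) ≤ ∑ j, Δ i j * |xs j|
      exact Finset.sum_nonneg fun j _ => mul_nonneg (hΔ i j) (abs_nonneg _)
    have key4 : ∑ i, p i * s i * (Δ.mulVec (fun j => |xs j|)) i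
        ≤ ∑ i, |p i| * (Δ.mulVec (fun j => |xs j|)) i := by
      apply Finset.sum_le_sum
      intro i _
      apply mul_le_mul_of_nonneg_right _ (hΔxs i)
      rcases hs i with h1 | h1
      · rw [h1, mul_one]; exact le_abs_self _
      · rw [h1]; simp only [mul_neg, mul_one]; exact neg_le_abs _
    have key5 : f (L (xs, fun j => |xs j|))
        = f (Ac.mulVec xs) - ∑ i, p i * s i * (Δ.mulVec (fun j => |xs j|)) i := by
      rw [hf, hf]
      simp_rw [hLapp]
      rw [← Finset.sum_sub_distrib]
      exact Finset.sum_congr rfl fun i _ => by ring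
    have hmem : L (xs, fun j => |xs j|) ∈ L '' D := by
      refine ⟨(xs, fun j => |xs j|), ⟨fun j => ⟨hxsl j, hxsu j⟩, fun j => ⟨?_, ?_⟩⟩, rfl⟩
      · exact le_rfl
      · show |xs j| ≤ |xl j| + |xu j|
        rw [abs_le]
        constructor
        · have := neg_abs_le (xl j)
          have := abs_nonneg (xu j)
          linarith [hxsl j]
        · have := le_abs_self (xu j)
          have := abs_nonneg (xl j)
          linarith [hxsu j]
    have hchain : f b < f b := by
      calc f b = f ((Ac - E).mulVec x) := by rw [hxeq]
        _ = ∑ j, ((∑ i, p i * Ac i j) - e j) * x j := key1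
        _ ≤ ∑ j, ((∑ i, p i * Ac i j) * xs j - (∑ i, |p i| * Δ i j) * |xs j|) := key2
        _ = f (Ac.mulVec xs) - ∑ i, |p i| * (Δ.mulVec (fun j => |xs j|)) i := key3
        _ ≤ f (Ac.mulVec xs) - ∑ i, p i * s i * (Δ.mulVec (fun j => |xs j|)) i := by
            linarith [key4]
        _ = f (L (xs, fun j => |xs j|)) := key5.symm
        _ < u := hfu _ hmem
        _ < f b := hub
    exact lt_irrefl _ hchain
  · -- (ii) → (i)
    intro h A hA
    by_contra hc
    push_neg at hc
    have hbS : b ∉ A.mulVecLin '' Set.Icc xl xu := by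
      rintro ⟨x, hxm, hxe⟩
      rw [Matrix.mulVecLin_apply] at hxe
      exact hc x (fun j => ⟨Pi.le_def.mp hxm.1 j, Pi.le_def.mp hxm.2 j⟩) hxe
    obtain ⟨f, u, hfu, hub⟩ := geometric_hahn_banach_closed_point
      ((convex_Icc xl xu).linear_image A.mulVecLin)
      ((isCompact_Icc.image A.mulVecLin.continuous_of_finiteDimensional).isClosed) hbS
    set p : Fin m → ℝ := fun i => f (Pi.single i 1) with hp
    have hf : ∀ v, f v = ∑ i, p i * v i := fun v => clm_eq_sum f v
    set s : Fin m → ℝ := fun i => if p i < 0 then -1 else 1 with hsg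
    have hpsg : ∀ i, p i * s i = |p i| := by
      intro i
      by_cases hpi : p i < 0
      · simp only [hsg, if_pos hpi, abs_of_neg hpi]; ring
      · simp only [hsg, if_neg hpi, abs_of_nonneg (le_of_not_gt hpi)]; ring
    obtain ⟨x₁, x₂, h1, h2, h3, h4⟩ := h s (fun i => by
      by_cases hpi : p i < 0 <;> simp [hsg, hpi])
    set x : Fin n → ℝ := fun j => x₁ j - x₂ j with hxdef
    set y : Fin n → ℝ := fun j => x₁ j + x₂ j with hydef
    have hxm : x ∈ Set.Icc xl xu :=
      Set.mem_Icc.mpr ⟨Pi.le_def.mpr fun j => (h3 j).1, Pi.le_def.mpr fun j => (h3 j).2⟩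
    have hbi : ∀ i, b i = Ac.mulVec x i - s i * Δ.mulVec y i := by
      intro i
      have e1 : x₁ - x₂ = x := by funext j; simp [hxdef]
      have e2 : x₁ + x₂ = y := by funext j; simp [hydef]
      calc b i = ((Ac - Matrix.diagonal s * Δ).mulVec x₁
          - (Ac + Matrix.diagonal s * Δ).mulVec x₂) i := congrFun h4 i
        _ = Ac.mulVec (x₁ - x₂) i - s i * Δ.mulVec (x₁ + x₂) i := keyeq Ac Δ s x₁ x₂ i
        _ = Ac.mulVec x i - s i * Δ.mulVec y i := by rw [e1, e2]
    have hAx : A.mulVec x ∈ A.mulVecLin '' Set.Icc xl xu := ⟨x, hxm, rfl⟩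
    have h5 : f b ≤ f (A.mulVec x) := by
      rw [hf, hf]
      apply Finset.sum_le_sum
      intro i _
      rw [hbi i]
      have habs : |Ac.mulVec x i - A.mulVec x i| ≤ Δ.mulVec y i := by
        have hrw : Ac.mulVec x i - A.mulVec x i = ∑ j, (Ac i j - A i j) * x j := by
          simp only [Matrix.mulVec, dotProduct]
          rw [← Finset.sum_sub_distrib]
          exact Finset.sum_congr rfl fun j _ => by ring
        rw [hrw]
        calc |∑ j, (Ac i j - A i j) * x j| ≤ ∑ j, |(Ac i j - A i j) * x j| :=
              Finset.abs_sum_le_sum_abs _ _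
          _ ≤ ∑ j, Δ i j * y j := by
              apply Finset.sum_le_sum
              intro j _
              rw [abs_mul]
              apply mul_le_mul _ _ (abs_nonneg _) (hΔ i j)
              · rw [abs_sub_comm]; exact hA i j
              · rw [abs_le]
                constructor
                · show -(y j) ≤ x j
                  simp only [hxdef, hydef]
                  linarith [h1 j, h2 j]
                · show x j ≤ y j
                  simp only [hxdef, hydef]
                  linarith [h1 j, h2 j]
          _ = Δ.mulVec y i := rfl
      have h6 : p i * (Ac.mulVec x i - A.mulVec x i) ≤ |p i| * Δ.mulVec y i := by
        calc p i * (Ac.mulVec x i - A.mulVec x i)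
            ≤ |p i * (Ac.mulVec x i - A.mulVec x i)| := le_abs_self _
          _ = |p i| * |Ac.mulVec x i - A.mulVec x i| := abs_mul _ _
          _ ≤ |p i| * Δ.mulVec y i := mul_le_mul_of_nonneg_left habs (abs_nonneg _)
      have hgoal : p i * (Ac.mulVec x i - s i * Δ.mulVec y i)
          = p i * Ac.mulVec x i - |p i| * Δ.mulVec y i := by
        rw [mul_sub, ← mul_assoc, hpsg i]
      rw [hgoal, mul_sub] at *
      linarith [h6]
    have := lt_trans (hfu _ hAx) hub
    linarith [h5]
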